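/- Let A₁,…,Aₙ be actions with costs t_i ≥ 0 and success probabilities p_i ∈ (0,1]. Define for a permutation σ of {1,…,n} the expected cost T(σ) = Σ_{i=1}^n t_{σ(i)} ∏_{j<i}(1−p_{σ(j)}). If the identity ordering satisfies t₁/p₁ ≤ t₂/p₂ ≤ … ≤ tₙ/pₙ, then T(id) ≤ T(σ) for every permutation σ. -/

import Mathlib

noncomputable def costL {α : Type*} (T Q : α → ℝ) : List α → ℝ
  | [] => 0
  | a :: l => T a + Q a * costL T Q l

lemma Iio_succ_eq {n : ℕ} (i : Fin n) :
    Finset.Iio (i.succ) =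
      insert (0 : Fin (n+1)) ((Finset.Iio i).map ⟨Fin.succ, Fin.succ_injective n⟩) := by
  ext k
  simp only [Finset.mem_Iio, Finset.mem_insert, Finset.mem_map, Function.Embedding.coeFn_mk]
  induction k using Fin.cases with
  | zero => simp [Fin.succ_pos]
  | succ j =>
    simp only [Fin.succ_lt_succ_iff, Fin.succ_ne_zero, false_or]
    constructor
    · intro h; exact ⟨j, by simpa using h, rfl⟩
    · rintro ⟨j', hj', hjj⟩
      rw [← Fin.succ_injective n hjj]; simpa using hj'

lemma sum_eq_costL {α : Type*} (T Q : α → ℝ) :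
    ∀ (n : ℕ) (f : Fin n → α),
      (∑ i : Fin n, T (f i) * ∏ j ∈ Finset.Iio i, Q (f j)) = costL T Q (List.ofFn f) := by
  intro n
  induction n with
  | zero => simp [costL]
  | succ m ih =>
    intro f
    rw [Fin.sum_univ_succ, List.ofFn_succ, costL]
    have h0 : (Finset.Iio (0 : Fin (m+1))) = ∅ := by
      ext k; simp
    have hprod : ∀ i : Fin m, ∏ j ∈ Finset.Iio i.succ, Q (f j)
        = Q (f 0) * ∏ j ∈ Finset.Iio i, Q (f j.succ) := by
      intro i
      rw [Iio_succ_eq, Finset.prod_insert (by simp [Fin.succ_ne_zero]), Finset.prod_map]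
      rfl
    have := ih (fun i => f i.succ)
    simp only [h0, Finset.prod_empty, mul_one, hprod, ← this, Finset.mul_sum]
    rw [add_right_inj]
    apply Finset.sum_congr rfl; intros; ring

lemma move_front {n : ℕ} (t p : Fin n → ℝ) (hp : ∀ i, 0 < p i ∧ p i ≤ 1) :
    ∀ (l : List (Fin n)) (x : Fin n), x ∈ l → (∀ b ∈ l, t x / p x ≤ t b / p b) →
      costL t (fun i => 1 - p i) (x :: l.erase x) ≤ costL t (fun i => 1 - p i) l := by
  intro l
  induction l with
  | nil => intro x hx; simp at hx
  | cons a l' ih =>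
    intro x hx hmin
    by_cases hxa : x = a
    · subst hxa; rw [List.erase_cons_head]
    · have h : x ∈ l' := (List.mem_cons.mp hx).resolve_left hxa
      rw [List.erase_cons_tail (by simpa using fun hh => hxa hh.symm)]
      have hihl : costL t (fun i => 1 - p i) (x :: l'.erase x)
          ≤ costL t (fun i => 1 - p i) l' :=
        ih x h (fun b hb => hmin b (List.mem_cons_of_mem _ hb))
      show t x + (1 - p x) * (t a + (1 - p a) * _) ≤ t a + (1 - p a) * _
      have hr : t x / p x ≤ t a / p a := hmin a List.mem_cons_self
      have hpx := hp x; have hpa := hp a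
      have hcross : t x * p a ≤ t a * p x :=
        (div_le_div_iff₀ hpx.1 hpa.1).mp hr
      have hqx : 0 ≤ 1 - p x := by linarith [hpx.2]
      have hqa : 0 ≤ 1 - p a := by linarith [hpa.2]
      have h2 : t x + (1 - p x) * costL t (fun i => 1 - p i) (l'.erase x)
          ≤ costL t (fun i => 1 - p i) l' := hihl
      nlinarith [h2, mul_le_mul_of_nonneg_left h2 hqa]

lemma sorted_min {n : ℕ} (t p : Fin n → ℝ) (hp : ∀ i, 0 < p i ∧ p i ≤ 1) :
    ∀ (s l : List (Fin n)), List.Pairwise (fun a b => t a / p a ≤ t b / p b) s →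
      l.Perm s → costL t (fun i => 1 - p i) s ≤ costL t (fun i => 1 - p i) l := by
  intro s
  induction s with
  | nil => intro l _ hperm; rw [List.perm_nil.mp hperm]
  | cons m s' ihs =>
    intro l hpw hperm
    obtain ⟨hm, hs'⟩ := List.pairwise_cons.mp hpw
    have hml : m ∈ l := hperm.mem_iff.mpr List.mem_cons_self
    have hce : l.Perm (m :: l.erase m) := List.perm_cons_erase hml
    have hperm' : (l.erase m).Perm s' := (hce.symm.trans hperm).cons_inv
    have h1 : costL t (fun i => 1 - p i) (m :: l.erase m) ≤ costL t (fun i => 1 - p i) l := by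
      apply move_front t p hp l m hml
      intro b hb
      rcases List.mem_cons.mp (hperm.mem_iff.mp hb) with h | h
      · subst h; rfl
      · exact hm b h
    refine le_trans ?_ h1
    show t m + (1 - p m) * _ ≤ t m + (1 - p m) * _
    have hq : 0 ≤ 1 - p m := by linarith [(hp m).2]
    have := ihs (l.erase m) hs' hperm'
    nlinarith

theorem stmt_4 (n : ℕ) (t p : Fin n → ℝ)
    (ht : ∀ i, 0 ≤ t i)
    (hp : ∀ i, 0 < p i ∧ p i ≤ 1)
    (hsort : ∀ i j : Fin n, i ≤ j → t i / p i ≤ t j / p j) :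
    ∀ σ : Equiv.Perm (Fin n),
      (∑ i : Fin n, t i * ∏ j ∈ Finset.Iio i, (1 - p j)) ≤
        ∑ i : Fin n, t (σ i) * ∏ j ∈ Finset.Iio i, (1 - p (σ j)) := by
  intro σ
  rw [sum_eq_costL t (fun i => 1 - p i) n (fun i => i),
      sum_eq_costL t (fun i => 1 - p i) n (fun i => σ i)]
  apply sorted_min t p hp
  · have h1 : List.ofFn (fun i : Fin n => i) = List.finRange n := List.ofFn_id n
    rw [h1]
    exact (List.pairwise_lt_finRange n).imp (fun hab => hsort _ _ (le_of_lt hab))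
  · apply List.perm_of_nodup_nodup_toFinset_eq
    · exact List.nodup_ofFn.mpr σ.injective
    · exact List.nodup_ofFn.mpr (fun a b h => h)
    · ext b
      simp only [List.mem_toFinset, List.mem_ofFn]
      constructor
      · intro _; exact ⟨b, rfl⟩
      · intro _; exact ⟨σ.symm b, σ.apply_symm_apply b⟩
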